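/- The group H₄ = F(3,4) = ⟨x₁, x₂, x₃, x₄ | x₂x₃x₄ = x₁, x₃x₄x₁ = x₂, x₄x₁x₂ = x₃, x₁x₂x₃ = x₄⟩ is isomorphic to the polycyclic group with presentation ⟨r, a, b, z | r² = z, a^r = a⁻¹, b^r = b⁻¹, b^a = bz², z central⟩, via r ↦ x₁, a ↦ x₁x₄⁻¹, b ↦ x₁x₂x₄⁻², z ↦ x₁x₂x₃x₄. -/
import Mathlib


/-- Relators of the Fibonacci group `H₄ = F(3,4)` on generators `x₁, x₂, x₃, x₄`
(indexed `0,1,2,3`): `x₂x₃x₄ = x₁`, `x₃x₄x₁ = x₂`, `x₄x₁x₂ = x₃`, `x₁x₂x₃ = x₄`. -/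
def h4Rels : Set (FreeGroup (Fin 4)) :=
  { FreeGroup.of 1 * FreeGroup.of 2 * FreeGroup.of 3 * (FreeGroup.of 0)⁻¹,
    FreeGroup.of 2 * FreeGroup.of 3 * FreeGroup.of 0 * (FreeGroup.of 1)⁻¹,
    FreeGroup.of 3 * FreeGroup.of 0 * FreeGroup.of 1 * (FreeGroup.of 2)⁻¹,
    FreeGroup.of 0 * FreeGroup.of 1 * FreeGroup.of 2 * (FreeGroup.of 3)⁻¹ }

/-- The Fibonacci group `H₄ = F(3,4)`. -/
abbrev H4 : Type := PresentedGroup h4Rels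

/-- Relators of the polycyclic presentation
`⟨r, a, b, z ∣ r² = z, z central, a^r = a⁻¹, b^r = b⁻¹, b^a = bz²⟩`
(generators indexed `0 ↦ r`, `1 ↦ a`, `2 ↦ b`, `3 ↦ z`). -/
def h4PcRels : Set (FreeGroup (Fin 4)) :=
  { FreeGroup.of 0 ^ 2 * (FreeGroup.of 3)⁻¹,
    FreeGroup.of 3 * FreeGroup.of 0 * (FreeGroup.of 3)⁻¹ * (FreeGroup.of 0)⁻¹,
    FreeGroup.of 3 * FreeGroup.of 1 * (FreeGroup.of 3)⁻¹ * (FreeGroup.of 1)⁻¹,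
    FreeGroup.of 3 * FreeGroup.of 2 * (FreeGroup.of 3)⁻¹ * (FreeGroup.of 2)⁻¹,
    (FreeGroup.of 0)⁻¹ * FreeGroup.of 1 * FreeGroup.of 0 * FreeGroup.of 1,
    (FreeGroup.of 0)⁻¹ * FreeGroup.of 2 * FreeGroup.of 0 * FreeGroup.of 2,
    (FreeGroup.of 1)⁻¹ * FreeGroup.of 2 * FreeGroup.of 1 *
      (FreeGroup.of 2 * FreeGroup.of 3 ^ 2)⁻¹ }

/-- The polycyclic group `⟨r, a, b, z ∣ r² = z, z central, a^r = a⁻¹, b^r = b⁻¹, b^a = bz²⟩`. -/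
abbrev H4Pc : Type := PresentedGroup h4PcRels

/- ## Generic helpers -/

private lemma comm1 {G : Type*} [Group G] {x y : G} (h : Commute x y) :
    x * y * x⁻¹ * y⁻¹ = 1 := by rw [h.eq]; group

private lemma pconjInv {G : Type*} [Group G] {x y c : G} (h : c⁻¹ * x * c = y) :
    c⁻¹ * x⁻¹ * c = y⁻¹ := by rw [← h]; group

private lemma pconjSwap {G : Type*} [Group G] {x y c : G} (h : c⁻¹ * x * c = y) :
    c * y * c⁻¹ = x := by rw [← h]; group

private lemma pmulOfConj {G : Type*} [Group G] {x y c : G} (h : c⁻¹ * x * c = y) :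
    x * c = c * y := by rw [← h]; group

/- ## The H4 side -/

section H4side

local notation "u" => (PresentedGroup.of 0 : H4)
local notation "v" => (PresentedGroup.of 1 : H4)
local notation "w" => (PresentedGroup.of 2 : H4)
local notation "s" => (PresentedGroup.of 3 : H4)

private lemma h4mk (x : FreeGroup (Fin 4)) (hx : x ∈ h4Rels) :
    PresentedGroup.mk h4Rels x = 1 :=
  (QuotientGroup.eq_one_iff _).mpr (Subgroup.subset_normalClosure hx)

private lemma mk_ofH (x : Fin 4) :
    PresentedGroup.mk h4Rels (FreeGroup.of x) = (PresentedGroup.of x : H4) := rfl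

private lemma L0 : v * w * s = u := by
  have h := h4mk _ (Set.mem_insert _ _)
  simp only [map_mul, map_inv, mk_ofH] at h
  exact mul_inv_eq_one.mp h

private lemma L1 : w * s * u = v := by
  have h := h4mk _ (Set.mem_insert_of_mem _ (Set.mem_insert _ _))
  simp only [map_mul, map_inv, mk_ofH] at h
  exact mul_inv_eq_one.mp h

private lemma L2 : s * u * v = w := by
  have h := h4mk _ (Set.mem_insert_of_mem _ (Set.mem_insert_of_mem _ (Set.mem_insert _ _)))
  simp only [map_mul, map_inv, mk_ofH] at h
  exact mul_inv_eq_one.mp h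

private lemma L3 : u * v * w = s := by
  have h := h4mk _ (Set.mem_insert_of_mem _ (Set.mem_insert_of_mem _
    (Set.mem_insert_of_mem _ (Set.mem_singleton _))))
  simp only [map_mul, map_inv, mk_ofH] at h
  exact mul_inv_eq_one.mp h

private lemma D1 : v * w = u * s⁻¹ := by
  calc v * w = (v * w * s) * s⁻¹ := by group
    _ = u * s⁻¹ := by rw [L0]

private lemma D2 : u * v = s⁻¹ * w := by
  calc u * v = s⁻¹ * (s * u * v) := by group
    _ = s⁻¹ * w := by rw [L2]

private lemma Dv : v = u⁻¹ * s⁻¹ * w := by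
  calc v = u⁻¹ * s⁻¹ * (s * u * v) := by group
    _ = u⁻¹ * s⁻¹ * w := by rw [L2]

private lemma Dwsu : w * s * u = u⁻¹ * s⁻¹ * w := L1.trans Dv

private lemma Dzu : s * s = u * u := by
  have h1 : u * (u * s⁻¹) = s := by rw [← D1, ← mul_assoc]; exact L3
  calc s * s = (u * (u * s⁻¹)) * s := by rw [h1]
    _ = u * u := by group

private lemma Dzw : s * s = w * w := by
  have h1 : (s⁻¹ * w) * w = s := by rw [← D2]; exact L3
  calc s * s = s * ((s⁻¹ * w) * w) := by rw [h1]
    _ = w * w := by group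

private lemma cz_s : Commute (s * s) s := (Commute.refl _).mul_left (Commute.refl _)

private lemma cz_u : Commute (s * s) u := by
  rw [Dzu]; exact (Commute.refl _).mul_left (Commute.refl _)

private lemma cz_w : Commute (s * s) w := by
  rw [Dzw]; exact (Commute.refl _).mul_left (Commute.refl _)

private lemma cz_v : Commute (s * s) v := by
  rw [Dv]; exact (cz_u.inv_right.mul_right cz_s.inv_right).mul_right cz_w

private lemma cz_sq : Commute (s * s) (s ^ 2) := by
  rw [pow_two]

private lemma f3z : u * v * w * s = s * s := by rw [L3]

private def fH : Fin 4 → H4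
  | 0 => .of 0
  | 1 => .of 0 * (.of 3)⁻¹
  | 2 => .of 0 * .of 1 * ((PresentedGroup.of 3 : H4) ^ 2)⁻¹
  | 3 => .of 0 * .of 1 * .of 2 * .of 3

private lemma fH0 : fH 0 = u := rfl
private lemma fH1 : fH 1 = u * s⁻¹ := rfl
private lemma fH2 : fH 2 = u * v * (s ^ 2)⁻¹ := rfl
private lemma fH3 : fH 3 = u * v * w * s := rfl

private lemma hE : ∀ x ∈ h4PcRels, FreeGroup.lift fH x = 1 := by
  intro x hx
  simp only [h4PcRels, Set.mem_insert_iff, Set.mem_singleton_iff] at hx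
  rcases hx with rfl | rfl | rfl | rfl | rfl | rfl | rfl
  · -- r^2 = z
    simp only [map_mul, map_inv, map_pow, FreeGroup.lift_apply_of, fH0, fH3]
    rw [f3z, Dzu]; group
  · -- z commutes with r
    simp only [map_mul, map_inv, map_pow, FreeGroup.lift_apply_of, fH0, fH3]
    rw [f3z]; exact comm1 cz_u
  · -- z commutes with a
    simp only [map_mul, map_inv, map_pow, FreeGroup.lift_apply_of, fH1, fH3]
    rw [f3z]; exact comm1 (cz_u.mul_right cz_s.inv_right)
  · -- z commutes with b
    simp only [map_mul, map_inv, map_pow, FreeGroup.lift_apply_of, fH2, fH3]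
    rw [f3z]; exact comm1 ((cz_u.mul_right cz_v).mul_right cz_sq.inv_right)
  · -- a^r = a⁻¹
    simp only [map_mul, map_inv, map_pow, FreeGroup.lift_apply_of, fH0, fH1]
    calc u⁻¹ * (u * s⁻¹) * u * (u * s⁻¹) = s⁻¹ * (u * u) * s⁻¹ := by group
      _ = s⁻¹ * (s * s) * s⁻¹ := by rw [← Dzu]
      _ = 1 := by group
  · -- b^r = b⁻¹
    simp only [map_mul, map_inv, map_pow, FreeGroup.lift_apply_of, fH0, fH2]
    rw [D2]
    have cK : Commute ((s * s)⁻¹) (u * (s⁻¹ * (w * (s * s)⁻¹))) :=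
      (cz_u.mul_right (cz_s.inv_right.mul_right
        (cz_w.mul_right (Commute.refl (s * s)).inv_right))).inv_left
    have hY : (w * s * u) * (u * (s⁻¹ * w)) = (s * s) * (s * s) := by
      calc (w * s * u) * (u * (s⁻¹ * w)) = w * (s * (u * u)) * (s⁻¹ * w) := by group
        _ = w * (s * (s * s)) * (s⁻¹ * w) := by rw [← Dzu]
        _ = w * (s * s) * w := by group
        _ = w * (w * w) * w := by rw [Dzw]
        _ = (w * w) * (w * w) := by group
        _ = (s * s) * (s * s) := by rw [← Dzw]
    calc _ = (u⁻¹ * (s⁻¹ * w)) * ((s * s)⁻¹ * (u * (s⁻¹ * (w * (s * s)⁻¹)))) := by group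
      _ = (u⁻¹ * (s⁻¹ * w)) * ((u * (s⁻¹ * (w * (s * s)⁻¹))) * (s * s)⁻¹) := by rw [cK.eq]
      _ = (u⁻¹ * s⁻¹ * w) * (u * (s⁻¹ * w)) * ((s * s)⁻¹ * (s * s)⁻¹) := by group
      _ = (w * s * u) * (u * (s⁻¹ * w)) * ((s * s)⁻¹ * (s * s)⁻¹) := by rw [← Dwsu]
      _ = ((s * s) * (s * s)) * ((s * s)⁻¹ * (s * s)⁻¹) := by rw [hY]
      _ = 1 := by group
  · -- b^a = b z²
    simp only [map_mul, map_inv, map_pow, FreeGroup.lift_apply_of, fH1, fH2, fH3]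
    rw [f3z, D2, pow_two ((PresentedGroup.of 3 : H4) * PresentedGroup.of 3)]
    calc _ = s * (u⁻¹ * s⁻¹ * w) * ((s * s)⁻¹ * u) * (s⁻¹ * ((s * s)⁻¹ * (w⁻¹ * s))) := by
          group
      _ = s * (u⁻¹ * s⁻¹ * w) * (u * (s * s)⁻¹) * (s⁻¹ * ((s * s)⁻¹ * (w⁻¹ * s))) := by
          rw [cz_u.inv_left.eq]
      _ = s * (w * s * u) * (u * (s * s)⁻¹) * (s⁻¹ * ((s * s)⁻¹ * (w⁻¹ * s))) := by
          rw [← Dwsu]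
      _ = s * (w * (s * ((u * u) * ((s * s)⁻¹ * (s⁻¹ * ((s * s)⁻¹ * (w⁻¹ * s))))))) := by
          group
      _ = s * (w * (s * ((s * s) * ((s * s)⁻¹ * (s⁻¹ * ((s * s)⁻¹ * (w⁻¹ * s))))))) := by
          rw [← Dzu]
      _ = s * (w * ((s * s)⁻¹ * (w⁻¹ * s))) := by group
      _ = s * (w * ((w * w)⁻¹ * (w⁻¹ * s))) := by rw [Dzw]
      _ = s * ((w * w)⁻¹ * s) := by group
      _ = s * ((s * s)⁻¹ * s) := by rw [← Dzw]
      _ = 1 := by group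

private def eH : H4Pc →* H4 := PresentedGroup.toGroup hE

end H4side

/- ## The polycyclic side -/

section PcSide

local notation "r" => (PresentedGroup.of 0 : H4Pc)
local notation "a" => (PresentedGroup.of 1 : H4Pc)
local notation "b" => (PresentedGroup.of 2 : H4Pc)
local notation "t" => (PresentedGroup.of 3 : H4Pc)

private lemma pcmk (x : FreeGroup (Fin 4)) (hx : x ∈ h4PcRels) :
    PresentedGroup.mk h4PcRels x = 1 :=
  (QuotientGroup.eq_one_iff _).mpr (Subgroup.subset_normalClosure hx)

private lemma mk_ofP (x : Fin 4) :
    PresentedGroup.mk h4PcRels (FreeGroup.of x) = (PresentedGroup.of x : H4Pc) := rfl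

private lemma Pz : r * r = t := by
  have h := pcmk _ (Set.mem_insert _ _)
  simp only [map_mul, map_inv, map_pow, mk_ofP] at h
  have h2 := mul_inv_eq_one.mp h
  rw [pow_two] at h2
  exact h2

private lemma ca : Commute t a := by
  have h := pcmk _ (Set.mem_insert_of_mem _ (Set.mem_insert_of_mem _ (Set.mem_insert _ _)))
  simp only [map_mul, map_inv, mk_ofP] at h
  show t * a = a * t
  calc t * a = (t * a * t⁻¹ * a⁻¹) * (a * t) := by group
    _ = a * t := by rw [h, one_mul]

private lemma cb : Commute t b := by
  have h := pcmk _ (Set.mem_insert_of_mem _ (Set.mem_insert_of_mem _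
    (Set.mem_insert_of_mem _ (Set.mem_insert _ _))))
  simp only [map_mul, map_inv, mk_ofP] at h
  show t * b = b * t
  calc t * b = (t * b * t⁻¹ * b⁻¹) * (b * t) := by group
    _ = b * t := by rw [h, one_mul]

private lemma conj_a : r⁻¹ * a * r = a⁻¹ := by
  have h := pcmk _ (Set.mem_insert_of_mem _ (Set.mem_insert_of_mem _
    (Set.mem_insert_of_mem _ (Set.mem_insert_of_mem _ (Set.mem_insert _ _)))))
  simp only [map_mul, map_inv, mk_ofP] at h
  calc r⁻¹ * a * r = (r⁻¹ * a * r * a) * a⁻¹ := by group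
    _ = a⁻¹ := by rw [h, one_mul]

private lemma conj_b : r⁻¹ * b * r = b⁻¹ := by
  have h := pcmk _ (Set.mem_insert_of_mem _ (Set.mem_insert_of_mem _
    (Set.mem_insert_of_mem _ (Set.mem_insert_of_mem _ (Set.mem_insert_of_mem _
      (Set.mem_insert _ _))))))
  simp only [map_mul, map_inv, mk_ofP] at h
  calc r⁻¹ * b * r = (r⁻¹ * b * r * b) * b⁻¹ := by group
    _ = b⁻¹ := by rw [h, one_mul]

private lemma Pab : a⁻¹ * b * a = b * (t * t) := by
  have h := pcmk _ (Set.mem_insert_of_mem _ (Set.mem_insert_of_mem _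
    (Set.mem_insert_of_mem _ (Set.mem_insert_of_mem _ (Set.mem_insert_of_mem _
      (Set.mem_insert_of_mem _ (Set.mem_singleton _)))))))
  simp only [map_mul, map_inv, map_pow, mk_ofP] at h
  have h2 := mul_inv_eq_one.mp h
  rw [pow_two] at h2
  exact h2

private lemma Pab' : a⁻¹ * b⁻¹ * a = (t * t)⁻¹ * b⁻¹ := by
  calc a⁻¹ * b⁻¹ * a = (a⁻¹ * b * a)⁻¹ := by group
    _ = (b * (t * t))⁻¹ := by rw [Pab]
    _ = (t * t)⁻¹ * b⁻¹ := by group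

private lemma conj_a' : r⁻¹ * a⁻¹ * r = a := by simpa using pconjInv conj_a
private lemma conj_b' : r⁻¹ * b⁻¹ * r = b := by simpa using pconjInv conj_b

private lemma ar : a * r = r * a⁻¹ := pmulOfConj conj_a
private lemma a'r : a⁻¹ * r = r * a := pmulOfConj conj_a'
private lemma rb : b * r = r * b⁻¹ := pmulOfConj conj_b
private lemma b'r : b⁻¹ * r = r * b := pmulOfConj conj_b'

private lemma ra' : r⁻¹ * a = a⁻¹ * r⁻¹ := by
  calc r⁻¹ * a = (r⁻¹ * a * r) * r⁻¹ := by group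
    _ = a⁻¹ * r⁻¹ := by rw [conj_a]

private lemma ra'' : r⁻¹ * a⁻¹ = a * r⁻¹ := by
  calc r⁻¹ * a⁻¹ = (r⁻¹ * a⁻¹ * r) * r⁻¹ := by group
    _ = a * r⁻¹ := by rw [conj_a']

private def gH : Fin 4 → H4Pc
  | 0 => .of 0
  | 1 => (.of 0)⁻¹ * .of 2 * (.of 1)⁻¹ * .of 0 * (.of 1)⁻¹ * .of 0
  | 2 => (.of 0)⁻¹ * .of 1 * (.of 0)⁻¹ * .of 1 * (.of 2)⁻¹ * .of 3 * (.of 0)⁻¹ * .of 1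
  | 3 => (.of 1)⁻¹ * .of 0

private lemma gH0 : gH 0 = r := rfl
private lemma gH1 : gH 1 = r⁻¹ * b * a⁻¹ * r * a⁻¹ * r := rfl
private lemma gH2 : gH 2 = r⁻¹ * a * r⁻¹ * a * b⁻¹ * t * r⁻¹ * a := rfl
private lemma gH3 : gH 3 = a⁻¹ * r := rfl

private lemma S1 : r⁻¹ * b * a⁻¹ * r * a⁻¹ * r = r * b := by
  calc r⁻¹ * b * a⁻¹ * r * a⁻¹ * r = r⁻¹ * b * ((a⁻¹ * r) * (a⁻¹ * r)) := by group
    _ = r⁻¹ * b * ((r * a) * (r * a)) := by rw [a'r]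
    _ = r⁻¹ * b * (r * ((a * r) * a)) := by group
    _ = r⁻¹ * b * (r * ((r * a⁻¹) * a)) := by rw [ar]
    _ = r⁻¹ * (b * r) * r := by group
    _ = r⁻¹ * (r * b⁻¹) * r := by rw [rb]
    _ = b⁻¹ * r := by group
    _ = r * b := b'r

private lemma S2 : r⁻¹ * a * r⁻¹ * a * b⁻¹ * t * r⁻¹ * a = b⁻¹ * (a⁻¹ * r⁻¹) := by
  calc r⁻¹ * a * r⁻¹ * a * b⁻¹ * t * r⁻¹ * a
      = (r⁻¹ * a) * ((r⁻¹ * a) * (b⁻¹ * (t * (r⁻¹ * a)))) := by group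
    _ = (a⁻¹ * r⁻¹) * ((a⁻¹ * r⁻¹) * (b⁻¹ * (t * (a⁻¹ * r⁻¹)))) := by rw [ra']
    _ = a⁻¹ * ((r⁻¹ * a⁻¹) * (r⁻¹ * (b⁻¹ * (t * (a⁻¹ * r⁻¹))))) := by group
    _ = a⁻¹ * ((a * r⁻¹) * (r⁻¹ * (b⁻¹ * (t * (a⁻¹ * r⁻¹))))) := by rw [ra'']
    _ = (r * r)⁻¹ * (b⁻¹ * (t * (a⁻¹ * r⁻¹))) := by group
    _ = t⁻¹ * (b⁻¹ * (t * (a⁻¹ * r⁻¹))) := by rw [Pz]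
    _ = (t⁻¹ * b⁻¹) * t * (a⁻¹ * r⁻¹) := by group
    _ = (b⁻¹ * t⁻¹) * t * (a⁻¹ * r⁻¹) := by rw [cb.inv_left.inv_right.eq]
    _ = b⁻¹ * (a⁻¹ * r⁻¹) := by group

private lemma hE' : ∀ x ∈ h4Rels, FreeGroup.lift gH x = 1 := by
  intro x hx
  simp only [h4Rels, Set.mem_insert_iff, Set.mem_singleton_iff] at hx
  rcases hx with rfl | rfl | rfl | rfl
  · -- x1 x2 x3 x0⁻¹
    simp only [map_mul, map_inv, FreeGroup.lift_apply_of, gH0, gH1, gH2, gH3]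
    rw [S1, S2]
    calc _ = r * a⁻¹ * r⁻¹ * a⁻¹ := by group
      _ = a * a⁻¹ := by rw [pconjSwap conj_a]
      _ = 1 := by group
  · -- x2 x3 x0 x1⁻¹
    simp only [map_mul, map_inv, FreeGroup.lift_apply_of, gH0, gH1, gH2, gH3]
    rw [S1, S2]
    calc _ = b⁻¹ * (a⁻¹ * (r⁻¹ * a⁻¹ * r)) * (r * b⁻¹ * r⁻¹) := by group
      _ = b⁻¹ * (a⁻¹ * a) * (r * b⁻¹ * r⁻¹) := by rw [conj_a']
      _ = b⁻¹ * (a⁻¹ * a) * b := by rw [pconjSwap conj_b]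
      _ = 1 := by group
  · -- x3 x0 x1 x2⁻¹
    simp only [map_mul, map_inv, FreeGroup.lift_apply_of, gH0, gH1, gH2, gH3]
    rw [S1, S2]
    have h5 : a⁻¹ * (t * t) = (t * t) * a⁻¹ := ((ca.mul_left ca).inv_right).eq.symm
    calc _ = a⁻¹ * (r * r) * (r * (b * r)) * (a * b) := by group
      _ = a⁻¹ * (r * r) * (r * (r * b⁻¹)) * (a * b) := by rw [rb]
      _ = a⁻¹ * ((r * r) * (r * r)) * (b⁻¹ * (a * b)) := by group
      _ = a⁻¹ * (t * t) * (b⁻¹ * (a * b)) := by rw [Pz]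
      _ = (t * t) * a⁻¹ * (b⁻¹ * (a * b)) := by rw [h5]
      _ = (t * t) * ((a⁻¹ * b⁻¹ * a) * b) := by group
      _ = (t * t) * (((t * t)⁻¹ * b⁻¹) * b) := by rw [Pab']
      _ = 1 := by group
  · -- x0 x1 x2 x3⁻¹
    simp only [map_mul, map_inv, FreeGroup.lift_apply_of, gH0, gH1, gH2, gH3]
    rw [S1, S2]
    calc _ = (r * r) * a⁻¹ * (r * r)⁻¹ * a := by group
      _ = t * a⁻¹ * t⁻¹ * a := by rw [Pz]
      _ = a⁻¹ * t * t⁻¹ * a := by rw [ca.inv_right.eq]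
      _ = 1 := by group

private def eH' : H4 →* H4Pc := PresentedGroup.toGroup hE'

end PcSide

/-- `H₄ = F(3,4)` is isomorphic to the polycyclic group above, via
`r ↦ x₁`, `a ↦ x₁x₄⁻¹`, `b ↦ x₁x₂x₄⁻²`, `z ↦ x₁x₂x₃x₄`. -/
theorem h4_iso_polycyclic :
    ∃ e : H4Pc ≃* H4,
      e (PresentedGroup.of 0) = PresentedGroup.of 0 ∧
      e (PresentedGroup.of 1) = PresentedGroup.of 0 * (PresentedGroup.of 3)⁻¹ ∧
      e (PresentedGroup.of 2) =
        PresentedGroup.of 0 * PresentedGroup.of 1 * ((PresentedGroup.of 3) ^ 2)⁻¹ ∧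
      e (PresentedGroup.of 3) =
        PresentedGroup.of 0 * PresentedGroup.of 1 * PresentedGroup.of 2 *
          PresentedGroup.of 3 := by
  have key : ∀ i : Fin 4, eH (eH' (PresentedGroup.of i)) = PresentedGroup.of i := by
    intro i
    fin_cases i
    · show eH (eH' (PresentedGroup.of 0)) = PresentedGroup.of 0
      simp only [eH, eH', PresentedGroup.toGroup.of, gH, fH, map_mul, map_inv, map_pow,
        pow_two]
    · show eH (eH' (PresentedGroup.of 1)) = PresentedGroup.of 1
      simp only [eH, eH', PresentedGroup.toGroup.of, gH, fH, map_mul, map_inv, map_pow,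
        pow_two]
      group
    · show eH (eH' (PresentedGroup.of 2)) = PresentedGroup.of 2
      simp only [eH, eH', PresentedGroup.toGroup.of, gH, fH, map_mul, map_inv, map_pow,
        pow_two]
      group
    · show eH (eH' (PresentedGroup.of 3)) = PresentedGroup.of 3
      simp only [eH, eH', PresentedGroup.toGroup.of, gH, fH, map_mul, map_inv, map_pow,
        pow_two]
      group
  have key' : ∀ i : Fin 4, eH' (eH (PresentedGroup.of i)) = PresentedGroup.of i := by
    intro i
    fin_cases i
    · show eH' (eH (PresentedGroup.of 0)) = PresentedGroup.of 0
      simp only [eH, eH', PresentedGroup.toGroup.of, gH, fH, map_mul, map_inv, map_pow,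
        pow_two]
    · show eH' (eH (PresentedGroup.of 1)) = PresentedGroup.of 1
      simp only [eH, eH', PresentedGroup.toGroup.of, gH, fH, map_mul, map_inv, map_pow,
        pow_two]
      group
    · show eH' (eH (PresentedGroup.of 2)) = PresentedGroup.of 2
      simp only [eH, eH', PresentedGroup.toGroup.of, gH, fH, map_mul, map_inv, map_pow,
        pow_two]
      group
    · show eH' (eH (PresentedGroup.of 3)) = PresentedGroup.of 3
      simp only [eH, eH', PresentedGroup.toGroup.of, gH, fH, map_mul, map_inv, map_pow,
        pow_two]
      group
  have hEE' : eH.comp eH' = MonoidHom.id H4 := PresentedGroup.ext fun i => key i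
  have hE'E : eH'.comp eH = MonoidHom.id H4Pc := PresentedGroup.ext fun i => key' i
  refine ⟨{ toFun := eH, invFun := eH',
            left_inv := fun x => by
              have := DFunLike.congr_fun hE'E x
              simpa using this,
            right_inv := fun x => by
              have := DFunLike.congr_fun hEE' x
              simpa using this,
            map_mul' := map_mul eH }, ?_, ?_, ?_, ?_⟩
  · exact (PresentedGroup.toGroup.of hE).trans fH0
  · exact (PresentedGroup.toGroup.of hE).trans fH1
  · exact (PresentedGroup.toGroup.of hE).trans fH2
  · exact (PresentedGroup.toGroup.of hE).trans fH3
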